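/- Let n ≥ 3 be odd and let μ ∈ ℝ satisfy a_{(n−1)/2}(μ) = 0. Then (a_{(n−3)/2}(μ))^2 = 1, a_{n−1}(μ) = −1, and a_{n−2}(μ) = −2(1−μ). -/
import Mathlib


noncomputable def a (μ : ℝ) : ℕ → ℝ
  | 0 => 1
  | 1 => 2 * (1 - μ)
  | n + 2 => 2 * (1 - μ) * a μ (n + 1) - a μ n

lemma a_add (μ : ℝ) (p q : ℕ) :
    a μ (p + q + 2) = a μ (p + 1) * a μ (q + 1) - a μ p * a μ q := by
  induction q using Nat.twoStepInduction with
  | zero => simp [a]; ring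
  | one =>
      have e : p + 1 + 1 = (p + 1) + 1 := rfl
      have h3 : a μ (p + 1 + 2) = 2 * (1 - μ) * a μ (p + 2) - a μ (p + 1) := rfl
      have h2 : a μ (p + 2) = 2 * (1 - μ) * a μ (p + 1) - a μ p := rfl
      rw [h3, h2]
      show _ = a μ (p + 1) * a μ 2 - a μ p * a μ 1
      simp [a]; ring
  | more k ih1 ih2 =>
      have e : p + (k + 2) + 2 = (p + k + 2) + 2 := by ring
      rw [e]
      have hr : a μ ((p + k + 2) + 2)
          = 2 * (1 - μ) * a μ (p + k + 2 + 1) - a μ (p + k + 2) := rfl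
      rw [hr]
      have e2 : p + k + 2 + 1 = p + (k + 1) + 2 := by ring
      rw [e2, ih2, ih1]
      show _ = a μ (p + 1) * a μ (k + 2 + 1) - a μ p * a μ (k + 2)
      have h3 : a μ (k + 2 + 1) = 2 * (1 - μ) * a μ (k + 2) - a μ (k + 1) := rfl
      have h2 : a μ (k + 2) = 2 * (1 - μ) * a μ (k + 1) - a μ k := rfl
      rw [h3, h2]
      ring

lemma a_det (μ : ℝ) (k : ℕ) :
    a μ (k + 2) * a μ k - a μ (k + 1) ^ 2 = -1 := by
  induction k with
  | zero => simp [a]; ring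
  | succ m ih =>
      show a μ (m + 3) * a μ (m + 1) - a μ (m + 2) ^ 2 = -1
      have h3 : a μ (m + 3) = 2 * (1 - μ) * a μ (m + 2) - a μ (m + 1) := rfl
      have h2 : a μ (m + 2) = 2 * (1 - μ) * a μ (m + 1) - a μ m := rfl
      linear_combination ih + a μ (m + 1) * h3 - a μ (m + 2) * h2

theorem stmt12 (n : ℕ) (hn : 3 ≤ n) (hodd : Odd n) (μ : ℝ)
    (h : a μ ((n - 1) / 2) = 0) :
    (a μ ((n - 3) / 2)) ^ 2 = 1 ∧ a μ (n - 1) = -1 ∧ a μ (n - 2) = -2 * (1 - μ) := by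
  obtain ⟨m, rfl⟩ := hodd
  have hm : 1 ≤ m := by omega
  have e1 : (2 * m + 1 - 1) / 2 = m := by omega
  rw [e1] at h
  rcases Nat.exists_eq_add_of_le hm with ⟨k, rfl⟩
  rcases Nat.eq_zero_or_pos k with rfl | hk
  · -- m = 1, n = 3
    have h1 : a μ 1 = 0 := h
    have h1' : 2 * (1 - μ) = 0 := h1
    have ea : (2 * (1 + 0) + 1 - 3) / 2 = 0 := by norm_num
    have eb : 2 * (1 + 0) + 1 - 1 = 2 := by norm_num
    have ec : 2 * (1 + 0) + 1 - 2 = 1 := by norm_num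
    rw [ea, eb, ec]
    have h2 : a μ 2 = 2 * (1 - μ) * a μ 1 - a μ 0 := rfl
    refine ⟨by simp [a], ?_, ?_⟩
    · rw [h2, h1]; simp [a]
    · rw [h1]; linarith
  · rcases Nat.exists_eq_add_of_le hk with ⟨j, rfl⟩
    have e2 : (2 * (1 + (1 + j)) + 1 - 3) / 2 = j + 1 := by omega
    have e4 : 2 * (1 + (1 + j)) + 1 - 1 = (j + 1) + (j + 1) + 2 := by omega
    have e5 : 2 * (1 + (1 + j)) + 1 - 2 = (j + 1) + j + 2 := by omega
    have hmj : 1 + (1 + j) = j + 2 := by omega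
    rw [hmj] at h
    have hrec : a μ (j + 2) = 2 * (1 - μ) * a μ (j + 1) - a μ j := rfl
    have hdet := a_det μ j
    rw [h, zero_mul] at hdet
    have hsq : a μ (j + 1) ^ 2 = 1 := by linarith
    refine ⟨by rw [e2]; exact hsq, ?_, ?_⟩
    · rw [e4, a_add]
      rw [show (j + 1) + 1 = j + 2 from rfl, h]
      linear_combination -hsq
    · rw [e5, a_add]
      rw [show (j + 1) + 1 = j + 2 from rfl, h]
      have hj : a μ j = 2 * (1 - μ) * a μ (j + 1) := by linarith [hrec, h]
      linear_combination (-(a μ (j + 1))) * hj - 2 * (1 - μ) * hsq
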